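/- Let H be an n_r×n_t complex matrix with n_t ≤ n_r, and let k ≤ n_t. Then there exists a subset S of rows with |S| = k such that log det(I + H_S H_S†) ≥ (k/n_t) · log det(I + H H†) − log( C(n_r,k) / C(n_t,k) ), where H_S is the submatrix of H with rows in S. -/

import Mathlib

open Matrix Polynomial

variable {n : Type*} [Fintype n] [DecidableEq n] {R : Type*} [CommRing R]

lemma det_piecewise_one (M : Matrix n n R) (s : Finset n) :
    (Matrix.of (s.piecewise (fun i => M i) (fun i => (1 : Matrix n n R) i))).det
      = (M.submatrix (fun i : {x // x ∈ s} => (i : n)) (fun i : {x // x ∈ s} => (i : n))).det := by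
  classical
  let e : {x // x ∈ s} ⊕ {x // x ∉ s} ≃ n := Equiv.sumCompl (· ∈ s)
  rw [← Matrix.det_submatrix_equiv_self e]
  have hB : (Matrix.of (s.piecewise (fun i => M i) (fun i => (1 : Matrix n n R) i))).submatrix e e
      = Matrix.fromBlocks
          (M.submatrix (fun i : {x // x ∈ s} => (i : n)) (fun i : {x // x ∈ s} => (i : n)))
          (M.submatrix (fun i : {x // x ∈ s} => (i : n)) (fun i : {x // x ∉ s} => (i : n)))
          0 1 := by
    ext i j
    rcases i with i | i <;> rcases j with j | j
    · simp [e, Matrix.submatrix_apply, Finset.piecewise_eq_of_mem _ _ _ i.2]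
    · simp [e, Matrix.submatrix_apply, Finset.piecewise_eq_of_mem _ _ _ i.2]
    · simp only [e, Matrix.submatrix_apply, Equiv.sumCompl_apply_inr, Equiv.sumCompl_apply_inl,
        Matrix.of_apply, Finset.piecewise_eq_of_notMem _ _ _ i.2, Matrix.fromBlocks_apply₂₁,
        Matrix.one_apply, Matrix.zero_apply]
      have : (i : n) ≠ (j : n) := fun h => i.2 (h ▸ j.2)
      simp [this]
    · simp only [e, Matrix.submatrix_apply, Equiv.sumCompl_apply_inr,
        Matrix.of_apply, Finset.piecewise_eq_of_notMem _ _ _ i.2, Matrix.fromBlocks_apply₂₂,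
        Matrix.one_apply, Subtype.ext_iff]
  rw [hB, Matrix.det_fromBlocks_zero₂₁]
  simp

lemma det_X_one_add_expand (M : Matrix n n R) :
    ((X : R[X]) • (1 : Matrix n n R[X]) + M.map C).det
      = ∑ s : Finset n, (X : R[X]) ^ sᶜ.card *
          C ((M.submatrix (fun i : {x // x ∈ s} => (i : n)) (fun i : {x // x ∈ s} => (i : n))).det) := by
  classical
  set a : n → n → R[X] := fun i => (M.map C) i with ha
  set b : n → n → R[X] := fun i => ((X : R[X]) • (1 : Matrix n n R[X])) i with hb
  have h0 : ((X : R[X]) • (1 : Matrix n n R[X]) + M.map C) = Matrix.of (a + b) := by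
    ext i j
    simp only [Matrix.add_apply, Pi.add_apply, Matrix.of_apply, a, b]
    ring_nf
  rw [h0]
  have hdet : (Matrix.of (a + b)).det
      = (Matrix.detRowAlternating : (n → R[X]) [⋀^n]→ₗ[R[X]] R[X]).toMultilinearMap (a + b) := rfl
  rw [hdet, MultilinearMap.map_add_univ]
  refine Finset.sum_congr rfl fun s _ => ?_
  set B : n → n → R[X] := s.piecewise a (fun i => (1 : Matrix n n R[X]) i) with hBdef
  have hs : s.piecewise a b = sᶜ.piecewise (fun i => (X : R[X]) • B i) B := by
    ext i j
    by_cases hi : i ∈ s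
    · have hi' : i ∉ sᶜ := by simp [hi]
      simp [Finset.piecewise_eq_of_mem _ _ _ hi, Finset.piecewise_eq_of_notMem _ _ _ hi', B]
    · have hi' : i ∈ sᶜ := by simp [hi]
      simp [Finset.piecewise_eq_of_notMem _ _ _ hi, Finset.piecewise_eq_of_mem _ _ _ hi', B, b,
        Matrix.smul_apply, smul_eq_mul]
  rw [hs]
  have hsmul := (Matrix.detRowAlternating :
      (n → R[X]) [⋀^n]→ₗ[R[X]] R[X]).toMultilinearMap.map_piecewise_smul
      (fun _ : n => (X : R[X])) B sᶜ
  rw [hsmul, Finset.prod_const]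
  have hfB : (Matrix.detRowAlternating : (n → R[X]) [⋀^n]→ₗ[R[X]] R[X]).toMultilinearMap B
      = C ((M.submatrix (fun i : {x // x ∈ s} => (i : n)) (fun i : {x // x ∈ s} => (i : n))).det) := by
    have h1 : (Matrix.detRowAlternating : (n → R[X]) [⋀^n]→ₗ[R[X]] R[X]).toMultilinearMap B
        = (Matrix.of (s.piecewise (fun i => (M.map C) i)
            (fun i => (1 : Matrix n n R[X]) i))).det := rfl
    rw [h1, det_piecewise_one (M.map C) s]
    have h2 : ((M.map C).submatrix (fun i : {x // x ∈ s} => (i : n))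
        (fun i : {x // x ∈ s} => (i : n)))
        = ((M.submatrix (fun i : {x // x ∈ s} => (i : n))
            (fun i : {x // x ∈ s} => (i : n))).map C) := rfl
    rw [h2]
    exact ((C : R →+* R[X]).map_det _).symm
  rw [hfB, smul_eq_mul]

lemma sum_minors_eq_esymm {n k : ℕ} (hk : k ≤ n) (A U : Matrix (Fin n) (Fin n) ℂ)
    (μ : Fin n → ℂ) (hUU : U * Uᴴ = 1) (hA : A = U * Matrix.diagonal μ * Uᴴ) :
    ∑ s ∈ Finset.powersetCard k (Finset.univ : Finset (Fin n)),
        (A.submatrix (fun i : {x // x ∈ s} => (i : Fin n))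
          (fun i : {x // x ∈ s} => (i : Fin n))).det
      = ∑ s ∈ Finset.powersetCard k (Finset.univ : Finset (Fin n)), ∏ i ∈ s, μ i := by
  classical
  set P : Polynomial ℂ := ((X : ℂ[X]) • (1 : Matrix (Fin n) (Fin n) ℂ[X]) + A.map C).det with hP
  -- diagonal form
  have hP2 : P = ∏ i : Fin n, ((X : ℂ[X]) + C (μ i)) := by
    have hmap : A.map C = (U.map C) * ((Matrix.diagonal μ).map C) * (Uᴴ.map C) := by
      rw [hA, Matrix.map_mul (f := (C : ℂ →+* ℂ[X])), Matrix.map_mul (f := (C : ℂ →+* ℂ[X]))]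
    have hUU' : (U.map C) * (Uᴴ.map C) = 1 := by
      rw [← Matrix.map_mul (f := (C : ℂ →+* ℂ[X])), hUU, Matrix.map_one C C.map_zero C.map_one]
    have hXone : (X : ℂ[X]) • (1 : Matrix (Fin n) (Fin n) ℂ[X])
        = (U.map C) * ((X : ℂ[X]) • (1 : Matrix (Fin n) (Fin n) ℂ[X])) * (Uᴴ.map C) := by
      rw [Matrix.mul_smul, Matrix.mul_one, Matrix.smul_mul, hUU']
    have hsplit : ((X : ℂ[X]) • (1 : Matrix (Fin n) (Fin n) ℂ[X]) + A.map C)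
        = (U.map C) * ((X : ℂ[X]) • (1 : Matrix (Fin n) (Fin n) ℂ[X])
            + (Matrix.diagonal μ).map C) * (Uᴴ.map C) := by
      rw [Matrix.mul_add, Matrix.add_mul, ← hXone, ← hmap]
    have hdiag : ((X : ℂ[X]) • (1 : Matrix (Fin n) (Fin n) ℂ[X])
        + (Matrix.diagonal μ).map C) = Matrix.diagonal (fun i => (X : ℂ[X]) + C (μ i)) := by
      ext i j
      rcases eq_or_ne i j with h | h
      · subst h; simp [Matrix.diagonal_apply_eq]
      · simp [Matrix.diagonal_apply_ne _ h, Matrix.one_apply_ne h]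
    have : P = (U.map C).det * ((Uᴴ.map C).det * (Matrix.diagonal
        (fun i => (X : ℂ[X]) + C (μ i))).det) := by
      rw [hP, hsplit, hdiag, Matrix.det_mul, Matrix.det_mul]; ring
    rw [this, ← mul_assoc, ← Matrix.det_mul, hUU', Matrix.det_one, one_mul,
      Matrix.det_diagonal]
  -- expansion form
  have hP1 : P = ∑ s : Finset (Fin n), (X : ℂ[X]) ^ sᶜ.card *
      C ((A.submatrix (fun i : {x // x ∈ s} => (i : Fin n))
          (fun i : {x // x ∈ s} => (i : Fin n))).det) := det_X_one_add_expand A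
  have hcoeff := congrArg (fun p : ℂ[X] => p.coeff (n - k)) (hP1.symm.trans hP2)
  -- LHS coefficient
  rw [Polynomial.finset_sum_coeff] at hcoeff
  have hL : ∀ s : Finset (Fin n), ((X : ℂ[X]) ^ sᶜ.card *
      C ((A.submatrix (fun i : {x // x ∈ s} => (i : Fin n))
          (fun i : {x // x ∈ s} => (i : Fin n))).det)).coeff (n - k)
      = if s.card = k then ((A.submatrix (fun i : {x // x ∈ s} => (i : Fin n))
          (fun i : {x // x ∈ s} => (i : Fin n))).det) else 0 := by
    intro s
    rw [mul_comm, Polynomial.coeff_C_mul, Polynomial.coeff_X_pow]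
    have hcard : s.card ≤ n := by
      simpa using Finset.card_le_card (Finset.subset_univ s)
    have hcc : sᶜ.card = n - s.card := by
      rw [Finset.card_compl]; simp
    by_cases h : s.card = k
    · rw [if_pos, if_pos h]
      · ring
      · omega
    · rw [if_neg, if_neg h]
      · ring
      · omega
  rw [Finset.sum_congr rfl (fun s _ => hL s), ← Finset.sum_filter] at hcoeff
  have hfilter : (Finset.univ : Finset (Finset (Fin n))).filter (fun s => s.card = k)
      = Finset.powersetCard k (Finset.univ : Finset (Fin n)) := by
    ext s
    simp [Finset.mem_powersetCard_univ]
  rw [hfilter] at hcoeff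
  -- RHS coefficient via Vieta
  have hvieta := Finset.prod_X_add_C_coeff (Finset.univ : Finset (Fin n)) μ
    (k := n - k) (by simp [Nat.sub_le])
  rw [hvieta] at hcoeff
  simpa [Nat.sub_sub_self hk] using hcoeff

lemma card_filter_mem_powersetCard {α : Type*} [DecidableEq α] (J : Finset α) (i : α)
    (hi : i ∈ J) (k : ℕ) :
    ((Finset.powersetCard (k + 1) J).filter (fun T => i ∈ T)).card
      = (J.card - 1).choose k := by
  classical
  have hbij : ((Finset.powersetCard (k + 1) J).filter (fun T => i ∈ T)).card
      = (Finset.powersetCard k (J.erase i)).card := by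
    apply Finset.card_bij (fun T _ => T.erase i)
    · intro T hT
      rw [Finset.mem_filter, Finset.mem_powersetCard] at hT
      rw [Finset.mem_powersetCard]
      refine ⟨fun x hx => ?_, ?_⟩
      · rw [Finset.mem_erase] at hx ⊢
        exact ⟨hx.1, hT.1.1 hx.2⟩
      · rw [Finset.card_erase_of_mem hT.2, hT.1.2]; omega
    · intro T hT T' hT' h
      rw [Finset.mem_filter] at hT hT'
      rw [← Finset.insert_erase hT.2, ← Finset.insert_erase hT'.2, h]
    · intro t ht
      rw [Finset.mem_powersetCard] at ht
      have hit : i ∉ t := fun h => (Finset.mem_erase.mp (ht.1 h)).1 rfl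
      refine ⟨insert i t, ?_, ?_⟩
      · rw [Finset.mem_filter, Finset.mem_powersetCard]
        exact ⟨⟨Finset.insert_subset hi (ht.1.trans (Finset.erase_subset _ _)),
          by rw [Finset.card_insert_of_notMem hit, ht.2]⟩, Finset.mem_insert_self _ _⟩
      · rw [Finset.erase_insert hit]
  rw [hbij, Finset.card_powersetCard, Finset.card_erase_of_mem hi]

lemma amgm_powersetCard {α : Type*} [DecidableEq α] (J : Finset α) (nt k : ℕ)
    (hJ : J.card = nt) (hk1 : 1 ≤ k) (hk : k ≤ nt) (μ : α → ℝ) (hμ : ∀ i ∈ J, 1 ≤ μ i) :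
    (nt.choose k : ℝ) * (∏ i ∈ J, μ i) ^ ((k : ℝ) / nt)
      ≤ ∑ T ∈ Finset.powersetCard k J, ∏ i ∈ T, μ i := by
  classical
  have hnt1 : 1 ≤ nt := hk1.trans hk
  set P := Finset.powersetCard k J with hP
  have hcardP : P.card = nt.choose k := by rw [hP, Finset.card_powersetCard, hJ]
  have hNpos : 0 < (nt.choose k : ℝ) := by
    exact_mod_cast Nat.choose_pos hk
  have hzpos : ∀ T ∈ P, (0 : ℝ) ≤ ∏ i ∈ T, μ i := by
    intro T hT
    rw [hP, Finset.mem_powersetCard] at hT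
    exact Finset.prod_nonneg fun i hiT => le_trans zero_le_one (hμ i (hT.1 hiT))
  have hgm := Real.geom_mean_le_arith_mean_weighted P (fun _ => 1 / (nt.choose k : ℝ))
    (fun T => ∏ i ∈ T, μ i) (fun _ _ => by positivity)
    (by rw [Finset.sum_const, hcardP, nsmul_eq_mul]; field_simp) hzpos
  -- compute the geometric mean side
  have hprodz : ∏ T ∈ P, (∏ i ∈ T, μ i) = (∏ i ∈ J, μ i) ^ ((nt - 1).choose (k - 1)) := by
    have h1 : ∀ T ∈ P, (∏ i ∈ T, μ i) = ∏ i ∈ J, (if i ∈ T then μ i else 1) := by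
      intro T hT
      rw [hP, Finset.mem_powersetCard] at hT
      rw [Finset.prod_ite_mem, Finset.inter_eq_right.mpr hT.1]
    rw [Finset.prod_congr rfl h1, Finset.prod_comm]
    rw [← Finset.prod_pow]
    apply Finset.prod_congr rfl
    intro i hiJ
    have hstep : ∏ T ∈ P, (if i ∈ T then μ i else 1)
        = ∏ T ∈ P.filter (fun T => i ∈ T), μ i :=
      (Finset.prod_filter (fun T => i ∈ T) (fun _ => μ i)).symm
    rw [hstep, Finset.prod_const, hP]
    congr 1
    have hk' : k - 1 + 1 = k := Nat.succ_pred_eq_of_pos hk1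
    rw [← hk', card_filter_mem_powersetCard J i hiJ (k - 1), hJ, hk']
  have hgeom : ∏ T ∈ P, (∏ i ∈ T, μ i) ^ (1 / (nt.choose k : ℝ))
      = (∏ i ∈ J, μ i) ^ ((k : ℝ) / nt) := by
    rw [Real.finset_prod_rpow P _ hzpos, hprodz]
    have hprodJ : (0 : ℝ) ≤ ∏ i ∈ J, μ i :=
      Finset.prod_nonneg fun i hiJ => le_trans zero_le_one (hμ i hiJ)
    rw [← Real.rpow_natCast (∏ i ∈ J, μ i) ((nt - 1).choose (k - 1)),
      ← Real.rpow_mul hprodJ]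
    congr 1
    have hid : k * nt.choose k = nt * (nt - 1).choose (k - 1) := by
      have h2 := Nat.add_one_mul_choose_eq (nt - 1) (k - 1)
      have h3 : nt - 1 + 1 = nt := by omega
      have h4 : k - 1 + 1 = k := by omega
      rw [h3, h4] at h2
      rw [h2]
      exact mul_comm _ _
    have hnt0 : (nt : ℝ) ≠ 0 := by positivity
    have hN0 : (nt.choose k : ℝ) ≠ 0 := ne_of_gt hNpos
    field_simp
    have : ((k : ℝ) * nt.choose k = (nt : ℝ) * (nt - 1).choose (k - 1)) := by
      exact_mod_cast hid
    linarith [this]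
  rw [hgeom] at hgm
  calc (nt.choose k : ℝ) * (∏ i ∈ J, μ i) ^ ((k : ℝ) / nt)
      ≤ (nt.choose k : ℝ) * ∑ T ∈ P, (1 / (nt.choose k : ℝ)) * (∏ i ∈ T, μ i) := by
        exact mul_le_mul_of_nonneg_left hgm (le_of_lt hNpos)
    _ = ∑ T ∈ P, ∏ i ∈ T, μ i := by
        rw [← Finset.mul_sum, ← mul_assoc]
        field_simp

theorem exists_row_subset_capacity_bound_small_k
    (nr nt k : ℕ) (hnt : nt ≤ nr) (hk : k ≤ nt)
    (H : Matrix (Fin nr) (Fin nt) ℂ) :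
    ∃ S : Finset (Fin nr), S.card = k ∧
      Real.log ((1 +
          (H.submatrix (fun i : {x : Fin nr // x ∈ S} => (i : Fin nr)) id) *
          (H.submatrix (fun i : {x : Fin nr // x ∈ S} => (i : Fin nr)) id)ᴴ).det).re ≥
        ((k : ℝ) / nt) * Real.log ((1 + H * Hᴴ).det).re -
          Real.log ((nr.choose k : ℝ) / (nt.choose k)) := by
  classical
  rcases Nat.eq_zero_or_pos k with hk0 | hkpos
  · subst hk0
    refine ⟨∅, Finset.card_empty, ?_⟩
    have hempty : IsEmpty {x : Fin nr // x ∈ (∅ : Finset (Fin nr))} :=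
      ⟨fun x => (Finset.notMem_empty _ x.2)⟩
    rw [Matrix.det_isEmpty]
    simp
  have hk1 : 1 ≤ k := hkpos
  have hknr : k ≤ nr := hk.trans hnt
  set M : Matrix (Fin nr) (Fin nr) ℂ := H * Hᴴ with hMdef
  have hM : M.IsHermitian := Matrix.isHermitian_mul_conjTranspose_self H
  set lam : Fin nr → ℝ := hM.eigenvalues with hlamdef
  have hlam0 : ∀ i, 0 ≤ lam i := fun i => Matrix.eigenvalues_self_mul_conjTranspose_nonneg H i
  set U : Matrix (Fin nr) (Fin nr) ℂ := (hM.eigenvectorUnitary : Matrix (Fin nr) (Fin nr) ℂ)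
    with hUdef
  have hUU : U * Uᴴ = 1 := by
    have := Matrix.mem_unitaryGroup_iff.mp hM.eigenvectorUnitary.2
    rwa [Matrix.star_eq_conjTranspose] at this
  have hspec : M = U * Matrix.diagonal (RCLike.ofReal ∘ lam) * Uᴴ := by
    have := hM.spectral_theorem
    rwa [Unitary.conjStarAlgAut_apply, Matrix.star_eq_conjTranspose] at this
  have hA : (1 + M) = U * Matrix.diagonal (fun i => 1 + (lam i : ℂ)) * Uᴴ := by
    have hdd : Matrix.diagonal (fun i : Fin nr => 1 + (lam i : ℂ))
        = 1 + Matrix.diagonal (RCLike.ofReal ∘ lam) := by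
      rw [← Matrix.diagonal_one, ← Matrix.diagonal_add]
      rfl
    rw [hdd, Matrix.mul_add, Matrix.add_mul, Matrix.mul_one, hUU, ← hspec]
  have hsum := sum_minors_eq_esymm hknr (1 + M) U (fun i => 1 + (lam i : ℂ)) hUU hA
  -- determinant of the full matrix
  have hUdet : U.det * Uᴴ.det = 1 := by
    rw [← Matrix.det_mul, hUU, Matrix.det_one]
  have hdetA : (1 + M).det = ∏ i, (1 + (lam i : ℂ)) := by
    rw [hA, Matrix.det_mul, Matrix.det_mul, Matrix.det_diagonal, mul_right_comm, hUdet, one_mul]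
  set D0 : ℝ := ∏ i, (1 + lam i) with hD0def
  have hD0c : ((D0 : ℝ) : ℂ) = ∏ i, (1 + (lam i : ℂ)) := by
    rw [hD0def]
    push_cast
    rfl
  have hD0_1 : 1 ≤ D0 := by
    rw [hD0def]
    calc (1:ℝ) = ∏ _i : Fin nr, (1:ℝ) := by simp
      _ ≤ ∏ i : Fin nr, (1 + lam i) :=
        Finset.prod_le_prod (fun i _ => by norm_num) (fun i _ => by linarith [hlam0 i])
  have hD0pos : 0 < D0 := lt_of_lt_of_le one_pos hD0_1
  have hdet_re : ((1 + M).det).re = D0 := by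
    rw [hdetA, ← hD0c, Complex.ofReal_re]
  -- rank considerations
  have hrank : (Finset.univ.filter (fun i => lam i ≠ 0)).card ≤ nt := by
    have h1 : M.rank = Fintype.card {i // lam i ≠ 0} := hM.rank_eq_card_non_zero_eigs
    have h2 : Fintype.card {i // lam i ≠ 0}
        = (Finset.univ.filter (fun i => lam i ≠ 0)).card := Fintype.card_subtype _
    have h3 : M.rank ≤ nt := le_trans (Matrix.rank_mul_le_left H Hᴴ) (Matrix.rank_le_width H)
    omega
  obtain ⟨J, hJsub, hJcard⟩ := Finset.exists_superset_card_eq hrank (by simpa using hnt)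
  -- the real sum
  set E : ℝ := ∑ S ∈ Finset.powersetCard k (Finset.univ : Finset (Fin nr)),
      ∏ i ∈ S, (1 + lam i) with hEdef
  have hEsum : ∑ S ∈ Finset.powersetCard k (Finset.univ : Finset (Fin nr)),
      (((1 + M).submatrix (fun i : {x // x ∈ S} => (i : Fin nr))
        (fun i : {x // x ∈ S} => (i : Fin nr))).det).re = E := by
    have h2 : ((E : ℝ) : ℂ) = ∑ S ∈ Finset.powersetCard k (Finset.univ : Finset (Fin nr)),
        ∏ i ∈ S, (1 + (lam i : ℂ)) := by
      rw [hEdef]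
      push_cast
      rfl
    have h1 : (∑ S ∈ Finset.powersetCard k (Finset.univ : Finset (Fin nr)),
        ((1 + M).submatrix (fun i : {x // x ∈ S} => (i : Fin nr))
          (fun i : {x // x ∈ S} => (i : Fin nr))).det) = ((E : ℝ) : ℂ) := hsum.trans h2.symm
    have h3 := congrArg Complex.re h1
    rw [Complex.re_sum] at h3
    rw [h3, Complex.ofReal_re]
  -- lower bound on E
  have hprodJ : ∏ i ∈ J, (1 + lam i) = D0 := by
    rw [hD0def]
    apply Finset.prod_subset (Finset.subset_univ J)
    intro i _ hiJ
    have : lam i = 0 := by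
      by_contra h
      exact hiJ (hJsub (Finset.mem_filter.mpr ⟨Finset.mem_univ i, h⟩))
    rw [this]
    norm_num
  have hEge : (nt.choose k : ℝ) * D0 ^ ((k : ℝ) / nt) ≤ E := by
    have hamgm := amgm_powersetCard J nt k hJcard hk1 hk (fun i => 1 + lam i)
      (fun i _ => by show (1:ℝ) ≤ 1 + lam i; linarith [hlam0 i])
    rw [hprodJ] at hamgm
    refine le_trans hamgm ?_
    apply Finset.sum_le_sum_of_subset_of_nonneg
      (Finset.powersetCard_mono (Finset.subset_univ J))
    intro T _ _
    exact Finset.prod_nonneg fun i _ => by show (0:ℝ) ≤ 1 + lam i; linarith [hlam0 i]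
  -- choose S
  have hPne : (Finset.powersetCard k (Finset.univ : Finset (Fin nr))).Nonempty :=
    Finset.powersetCard_nonempty.mpr (by simpa using hknr)
  have hCnr : (0 : ℝ) < nr.choose k := by exact_mod_cast Nat.choose_pos hknr
  have hCnt : (0 : ℝ) < nt.choose k := by exact_mod_cast Nat.choose_pos hk
  have hconst : ∑ _S ∈ Finset.powersetCard k (Finset.univ : Finset (Fin nr)),
      E / (nr.choose k : ℝ) = E := by
    rw [Finset.sum_const, Finset.card_powersetCard, Finset.card_univ, Fintype.card_fin,
      nsmul_eq_mul]
    field_simp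
  obtain ⟨S, hSmem, hSge⟩ := Finset.exists_le_of_sum_le hPne (le_of_eq (hconst.trans hEsum.symm))
  have hScard : S.card = k := (Finset.mem_powersetCard.mp hSmem).2
  refine ⟨S, hScard, ?_⟩
  -- identify the submatrix
  have hAS : (1 + (H.submatrix (fun i : {x : Fin nr // x ∈ S} => (i : Fin nr)) id) *
        (H.submatrix (fun i : {x : Fin nr // x ∈ S} => (i : Fin nr)) id)ᴴ)
      = (1 + M).submatrix (fun i : {x // x ∈ S} => (i : Fin nr))
          (fun i : {x // x ∈ S} => (i : Fin nr)) := by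
    ext a b
    simp only [Matrix.add_apply, Matrix.submatrix_apply, Matrix.mul_apply,
      Matrix.conjTranspose_apply, Matrix.one_apply, Matrix.submatrix_apply, id_eq,
      hMdef, Subtype.ext_iff]
  rw [hAS]
  -- final log computation
  set x : ℝ := (((1 + M).submatrix (fun i : {x // x ∈ S} => (i : Fin nr))
      (fun i : {x // x ∈ S} => (i : Fin nr))).det).re with hxdef
  have hxge : (nt.choose k : ℝ) * D0 ^ ((k : ℝ) / nt) / (nr.choose k) ≤ x := by
    have h1 : E / (nr.choose k : ℝ) ≤ x := hSge
    have h2 : (nt.choose k : ℝ) * D0 ^ ((k : ℝ) / nt) / (nr.choose k) ≤ E / (nr.choose k) := by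
      gcongr
    exact le_trans h2 h1
  have hrpos : (0:ℝ) < (nt.choose k : ℝ) * D0 ^ ((k : ℝ) / nt) / (nr.choose k) := by positivity
  have hlogx : Real.log ((nt.choose k : ℝ) * D0 ^ ((k : ℝ) / nt) / (nr.choose k))
      ≤ Real.log x := Real.log_le_log hrpos hxge
  have hlogr : Real.log ((nt.choose k : ℝ) * D0 ^ ((k : ℝ) / nt) / (nr.choose k))
      = Real.log (nt.choose k : ℝ) + ((k : ℝ)/nt) * Real.log D0 - Real.log (nr.choose k) := by
    rw [Real.log_div (by positivity) (ne_of_gt hCnr), Real.log_mul (ne_of_gt hCnt) (by positivity),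
      Real.log_rpow hD0pos]
  have hgoalrhs : ((k : ℝ) / nt) * Real.log ((1 + M).det).re -
      Real.log ((nr.choose k : ℝ) / (nt.choose k))
      = ((k : ℝ)/nt) * Real.log D0 - (Real.log (nr.choose k) - Real.log (nt.choose k)) := by
    rw [Real.log_div (ne_of_gt hCnr) (ne_of_gt hCnt), hdet_re]
  rw [ge_iff_le, hgoalrhs]
  linarith [hlogx, hlogr]
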